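/- arXiv:2108.11930 — 3 statements merged into one kernel-verified Lean document; each statement's English description precedes it below -/
import Mathlib

section
/- Let g : ℝ^d → ℝ be a continuous function vanishing in a neighborhood of the origin. Then for every t > 0, the map ω ↦ Σ_{0 < s ≤ t} g(Δω(s)), defined on the space of càdlàg functions ω : [0,∞) → ℝ^d, is continuous with respect to the local uniform topology. -/
open Filter Set Function
open scoped NNReal Topology

/-- A path `ω : [0,∞) → E` is càdlàg: right-continuous everywhere, with left
limits at every `t > 0`. -/
def Cadlag {E : Type*} [TopologicalSpace E] (ω : ℝ≥0 → E) : Prop :=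
  (∀ t, ContinuousWithinAt ω (Ici t) t) ∧
  (∀ t : ℝ≥0, 0 < t → ∃ l, Tendsto ω (nhdsWithin t (Iio t)) (nhds l))

/-- Local uniform convergence of paths: uniform convergence on each `[0, T]`. -/
def LocUnifTendsto {E : Type*} [PseudoMetricSpace E]
    (ωn : ℕ → ℝ≥0 → E) (ω : ℝ≥0 → E) : Prop :=
  ∀ T : ℝ≥0, TendstoUniformlyOn ωn ω atTop (Icc 0 T)

/-- The sum `∑_{0 < s ≤ t} g(Δω(s))` of `g` applied to the jumps of `ω`
over `(0, t]`.  Since `g` vanishes near `0` and `ω` is càdlàg, only finitely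
many terms are nonzero. -/
noncomputable def jumpFunctional {d : ℕ} (g : EuclideanSpace ℝ (Fin d) → ℝ)
    (ω : ℝ≥0 → EuclideanSpace ℝ (Fin d)) (t : ℝ≥0) : ℝ :=
  ∑' s : Ioc (0 : ℝ≥0) t, g (ω s - Function.leftLim ω s)

lemma aux_neBot {a s : ℝ≥0} (hs : a < s) : (𝓝[<] s).NeBot :=
  nhdsWithin_Iio_self_neBot' ⟨a, hs⟩

lemma cadlag_tendsto_leftLim {E : Type*} [TopologicalSpace E] [T2Space E]
    {ω : ℝ≥0 → E} (hω : Cadlag ω)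
    {s : ℝ≥0} (hs : 0 < s) : Tendsto ω (𝓝[<] s) (𝓝 (leftLim ω s)) := by
  obtain ⟨l, hl⟩ := hω.2 s hs
  have := aux_neBot hs
  rwa [leftLim_eq_of_tendsto hl]

lemma leftLim_dist_le {E : Type*} [MetricSpace E] {ω : ℝ≥0 → E} {a s : ℝ≥0} {L y : E} {r : ℝ}
    (has : a < s) (hlim : Tendsto ω (𝓝[<] s) (𝓝 L))
    (h : ∀ u, a < u → u < s → dist (ω u) y ≤ r) : dist L y ≤ r := by
  have := aux_neBot has
  have hev : ∀ᶠ u in 𝓝[<] s, dist (ω u) y ≤ r := by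
    filter_upwards [Ioo_mem_nhdsLT_of_mem (right_mem_Ioc.2 has)] with u hu
    exact h u hu.1 hu.2
  exact le_of_tendsto (hlim.dist tendsto_const_nhds) hev

lemma finite_jumps {E : Type*} [MetricSpace E] {ω : ℝ≥0 → E} (hω : Cadlag ω)
    (t : ℝ≥0) {c : ℝ} (hc : 0 < c) :
    {s : ℝ≥0 | s ∈ Ioc 0 t ∧ c ≤ dist (ω s) (leftLim ω s)}.Finite := by
  have key : ∀ x : ℝ≥0, ∃ U ∈ 𝓝 x, ∀ s ∈ U, s ≠ x → 0 < s → dist (ω s) (leftLim ω s) < c := by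
    intro x
    have hr : {u | dist (ω u) (ω x) ≤ c / 4} ∈ 𝓝[≥] x :=
      (hω.1 x) (Metric.closedBall_mem_nhds _ (by linarith))
    obtain ⟨u, hu, hIco⟩ := mem_nhdsGE_iff_exists_Ico_subset.1 hr
    have hjump_right : ∀ s, x < s → s < u → dist (ω s) (leftLim ω s) < c := by
      intro s hxs hsu
      have h1 : dist (ω s) (ω x) ≤ c / 4 := hIco ⟨hxs.le, hsu⟩
      have h2 : dist (leftLim ω s) (ω x) ≤ c / 4 :=
        leftLim_dist_le hxs (cadlag_tendsto_leftLim hω (lt_of_le_of_lt ((zero_le : (0:ℝ≥0) ≤ x)) hxs))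
          (fun v hv1 hv2 => hIco ⟨hv1.le, hv2.trans hsu⟩)
      calc dist (ω s) (leftLim ω s) ≤ dist (ω s) (ω x) + dist (leftLim ω s) (ω x) :=
            dist_triangle_right _ _ _
        _ ≤ c / 4 + c / 4 := by gcongr
        _ < c := by linarith
    rcases eq_or_lt_of_le ((zero_le : (0:ℝ≥0) ≤ x)) with hx0 | hx0
    · refine ⟨Iio u, Iio_mem_nhds (hx0 ▸ hu), fun s hs hsne hspos => ?_⟩
      exact hjump_right s (hx0 ▸ hspos) hs
    · have hl : {v | dist (ω v) (leftLim ω x) ≤ c / 4} ∈ 𝓝[<] x :=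
        (cadlag_tendsto_leftLim hω hx0) (Metric.closedBall_mem_nhds _ (by linarith))
      obtain ⟨a, ha, hIoo⟩ := (mem_nhdsLT_iff_exists_Ioo_subset' hx0).1 hl
      refine ⟨Ioo a u, Ioo_mem_nhds ha hu, fun s hs hsne hspos => ?_⟩
      rcases lt_or_gt_of_ne hsne with hsx | hsx
      · have h1 : dist (ω s) (leftLim ω x) ≤ c / 4 := hIoo ⟨hs.1, hsx⟩
        have h2 : dist (leftLim ω s) (leftLim ω x) ≤ c / 4 :=
          leftLim_dist_le hs.1 (cadlag_tendsto_leftLim hω hspos)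
            (fun v hv1 hv2 => hIoo ⟨hv1, hv2.trans hsx⟩)
        calc dist (ω s) (leftLim ω s)
            ≤ dist (ω s) (leftLim ω x) + dist (leftLim ω s) (leftLim ω x) :=
              dist_triangle_right _ _ _
          _ ≤ c / 4 + c / 4 := by gcongr
          _ < c := by linarith
      · exact hjump_right s hsx hs.2
  choose U hUmem hU using key
  obtain ⟨F, -, hF⟩ := isCompact_Icc.elim_nhds_subcover U (fun x _ => hUmem x)
  refine (F.finite_toSet).subset fun s hs => ?_
  obtain ⟨hs1, hs2⟩ := hs
  obtain ⟨x, hxF, hsU⟩ := mem_iUnion₂.1 (hF ⟨hs1.1.le, hs1.2⟩)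
  by_cases hsx : s = x
  · exact hsx ▸ hxF
  · exact absurd hs2 (not_le.2 (hU x s hsU hsx hs1.1))

/-- If two càdlàg paths are uniformly `δ`-close on `[0, t]`, their jumps at any
`s ∈ (0, t]` are `2δ`-close. -/
lemma jump_close {E : Type*} [NormedAddCommGroup E] {ω₁ ω₂ : ℝ≥0 → E}
    (h₁ : Cadlag ω₁) (h₂ : Cadlag ω₂) {t : ℝ≥0} {δ : ℝ}
    (hδ : ∀ u ∈ Icc (0:ℝ≥0) t, dist (ω₁ u) (ω₂ u) ≤ δ) {s : ℝ≥0} (hs : s ∈ Ioc (0:ℝ≥0) t) :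
    dist (ω₁ s - leftLim ω₁ s) (ω₂ s - leftLim ω₂ s) ≤ 2 * δ := by
  have hL : dist (leftLim ω₁ s) (leftLim ω₂ s) ≤ δ := by
    have := aux_neBot hs.1
    refine le_of_tendsto ((cadlag_tendsto_leftLim h₁ hs.1).dist
      (cadlag_tendsto_leftLim h₂ hs.1)) ?_
    filter_upwards [Ioo_mem_nhdsLT_of_mem (right_mem_Ioc.2 hs.1)] with u hu
    exact hδ u ⟨(zero_le : (0:ℝ≥0) ≤ u), hu.2.le.trans hs.2⟩
  calc dist (ω₁ s - leftLim ω₁ s) (ω₂ s - leftLim ω₂ s)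
      ≤ dist (ω₁ s) (ω₂ s) + dist (leftLim ω₁ s) (leftLim ω₂ s) := dist_sub_sub_le _ _ _ _
    _ ≤ δ + δ := add_le_add (hδ s ⟨(zero_le : (0:ℝ≥0) ≤ s), hs.2⟩) hL
    _ = 2 * δ := by ring

theorem stmt5 {d : ℕ} (g : EuclideanSpace ℝ (Fin d) → ℝ)
    (hg_cont : Continuous g)
    (hg0 : ∃ ε > (0 : ℝ), ∀ x : EuclideanSpace ℝ (Fin d), ‖x‖ < ε → g x = 0)
    (ωn : ℕ → ℝ≥0 → EuclideanSpace ℝ (Fin d)) (ω : ℝ≥0 → EuclideanSpace ℝ (Fin d))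
    (hωn : ∀ n, Cadlag (ωn n)) (hω : Cadlag ω)
    (hconv : LocUnifTendsto ωn ω) :
    ∀ t : ℝ≥0, 0 < t →
      Tendsto (fun n => jumpFunctional g (ωn n) t) atTop
        (nhds (jumpFunctional g ω t)) := by
  classical
  obtain ⟨ε, hε, hgε⟩ := hg0
  intro t ht
  have hFfin := finite_jumps hω t (half_pos hε)
  set Φ : Finset ↥(Ioc (0:ℝ≥0) t) := hFfin.toFinset.subtype (· ∈ Ioc (0:ℝ≥0) t) with hΦ
  -- characterization of non-membership
  have hΦnot : ∀ b : ↥(Ioc (0:ℝ≥0) t), b ∉ Φ →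
      dist (ω b) (leftLim ω b) < ε / 2 := by
    intro b hb
    rw [hΦ, Finset.mem_subtype, Set.Finite.mem_toFinset] at hb
    by_contra h
    exact hb ⟨b.2, not_lt.1 h⟩
  -- value of the limit functional
  have hωval : jumpFunctional g ω t = ∑ s ∈ Φ, g (ω s - leftLim ω s) := by
    refine tsum_eq_sum fun b hb => ?_
    refine hgε _ ?_
    have h : ‖ω (b:ℝ≥0) - leftLim ω b‖ = dist (ω (b:ℝ≥0)) (leftLim ω b) := (dist_eq_norm _ _).symm
    rw [h]; exact (hΦnot b hb).trans (by linarith)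
  rw [hωval]
  -- eventual closeness
  have hev : ∀ᶠ n in atTop, ∀ u ∈ Icc (0:ℝ≥0) t, dist (ω u) (ωn n u) ≤ ε / 8 := by
    filter_upwards [Metric.tendstoUniformlyOn_iff.1 (hconv t) (ε/8) (by linarith)] with n hn u hu
    exact (hn u hu).le
  -- eventual equality of the functional with the finite sum
  have heq : ∀ᶠ n in atTop,
      jumpFunctional g (ωn n) t = ∑ s ∈ Φ, g (ωn n s - leftLim (ωn n) s) := by
    filter_upwards [hev] with n hn
    refine tsum_eq_sum fun b hb => ?_
    refine hgε _ ?_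
    have h1 : dist (ωn n (b:ℝ≥0) - leftLim (ωn n) b) (ω (b:ℝ≥0) - leftLim ω b) ≤ 2 * (ε/8) :=
      jump_close (hωn n) hω (fun u hu => (dist_comm (ω u) (ωn n u)) ▸ hn u hu) b.2
    have h2 : ‖ω (b:ℝ≥0) - leftLim ω b‖ < ε / 2 := by
      rw [← dist_zero_right]
      calc dist (ω (b:ℝ≥0) - leftLim ω b) 0 = dist (ω (b:ℝ≥0)) (leftLim ω b) := by
            rw [dist_eq_norm, dist_eq_norm, sub_zero]
        _ < ε / 2 := hΦnot b hb
    calc ‖ωn n (b:ℝ≥0) - leftLim (ωn n) b‖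
        = dist (ωn n (b:ℝ≥0) - leftLim (ωn n) b) 0 := (dist_zero_right _).symm
      _ ≤ dist (ωn n (b:ℝ≥0) - leftLim (ωn n) b) (ω (b:ℝ≥0) - leftLim ω b)
            + dist (ω (b:ℝ≥0) - leftLim ω b) 0 := dist_triangle _ _ _
      _ < 2 * (ε/8) + ε / 2 := by
            have := (dist_zero_right (ω (b:ℝ≥0) - leftLim ω b)) ▸ h2
            exact add_lt_add_of_le_of_lt h1 (by rwa [dist_zero_right])
      _ ≤ ε := by linarith
  -- convergence of the finite sum
  have hsum : Tendsto (fun n => ∑ s ∈ Φ, g (ωn n s - leftLim (ωn n) s)) atTop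
      (𝓝 (∑ s ∈ Φ, g (ω s - leftLim ω s))) := by
    refine tendsto_finset_sum _ fun b _ => ?_
    refine (hg_cont.continuousAt.tendsto).comp ?_
    rw [Metric.tendsto_nhds]
    intro r hr
    filter_upwards [Metric.tendstoUniformlyOn_iff.1 (hconv t) (r/4) (by linarith)] with n hn
    calc dist (ωn n (b:ℝ≥0) - leftLim (ωn n) b) (ω (b:ℝ≥0) - leftLim ω b) ≤ 2 * (r/4) :=
          jump_close (hωn n) hω (fun u hu => (dist_comm (ω u) (ωn n u)) ▸ (hn u hu).le) b.2
      _ < r := by linarith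
  exact hsum.congr' (heq.mono fun n h => h.symm)
end

section
/- Let 𝔘 : Ω → [0,1] and X : Ω → L^p_loc([0,∞), ℝ^d) and define, for m > 0, T_m(u, x) = inf{ t ≥ 0 : ∫₀ᵗ (1 + u + ‖x(s)‖^p) ds ≥ m } on [0,1] × L^p_loc([0,∞), ℝ^d). Then T_m is a continuous function of (u, x) with respect to the product of the usual topology on [0,1] and the local L^p topology. -/
open MeasureTheory Filter Set

/-- `T_m(u, x) = inf { t ≥ 0 : ∫₀ᵗ (1 + u + ‖x(s)‖^p) ds ≥ m }`. -/
noncomputable def hittingTimeLp {d : ℕ} (p m : ℝ) (u : ℝ)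
    (x : ℝ → EuclideanSpace ℝ (Fin d)) : ℝ :=
  sInf {t : ℝ | 0 ≤ t ∧ m ≤ ∫ s in (0 : ℝ)..t, (1 + u + ‖x s‖ ^ p)}

section aux

variable {d : ℕ}

/-- Convergence of the `p`-th power integrals from `L^p` convergence, on a fixed interval. -/
lemma key_conv (p : ℝ) (hp : 1 ≤ p) {t : ℝ} (ht : 0 < t)
    (x : ℕ → ℝ → EuclideanSpace ℝ (Fin d)) (xlim : ℝ → EuclideanSpace ℝ (Fin d))
    (hxm : ∀ n, Measurable (x n)) (hxlimm : Measurable xlim)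
    (hxloc : ∀ n, IntervalIntegrable (fun s => ‖x n s‖ ^ p) volume 0 t)
    (hxlimloc : IntervalIntegrable (fun s => ‖xlim s‖ ^ p) volume 0 t)
    (hconv : Tendsto (fun n => ∫ s in (0:ℝ)..t, ‖x n s - xlim s‖ ^ p) atTop (nhds 0)) :
    Tendsto (fun n => ∫ s in (0:ℝ)..t, ‖x n s‖ ^ p) atTop
      (nhds (∫ s in (0:ℝ)..t, ‖xlim s‖ ^ p)) := by
  set μ := volume.restrict (Ioc (0:ℝ) t) with hμ
  set P := ENNReal.ofReal p with hP
  have hp0 : (0:ℝ) < p := lt_of_lt_of_le one_pos hp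
  have hP0 : P ≠ 0 := by simp [hP, ENNReal.ofReal_eq_zero, not_le, hp0]
  have hPtop : P ≠ ⊤ := ENNReal.ofReal_ne_top
  have hPt : P.toReal = p := ENNReal.toReal_ofReal hp0.le
  have hP1 : (1:ENNReal) ≤ P := by
    rw [hP, ← ENNReal.ofReal_one]; exact ENNReal.ofReal_le_ofReal hp
  -- Memℒp facts
  have memn : ∀ n, MemLp (x n) P μ := by
    intro n
    rw [← memLp_norm_rpow_iff (p := P) ((hxm n).aestronglyMeasurable) hP0 hPtop,
      ENNReal.div_self hP0 hPtop, memLp_one_iff_integrable, hPt]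
    exact (intervalIntegrable_iff_integrableOn_Ioc_of_le ht.le).1 (hxloc n)
  have meml : MemLp xlim P μ := by
    rw [← memLp_norm_rpow_iff (p := P) hxlimm.aestronglyMeasurable hP0 hPtop,
      ENNReal.div_self hP0 hPtop, memLp_one_iff_integrable, hPt]
    exact (intervalIntegrable_iff_integrableOn_Ioc_of_le ht.le).1 hxlimloc
  have memd : ∀ n, MemLp (fun s => x n s - xlim s) P μ := fun n => (memn n).sub meml
  -- real quantities
  set a : ℕ → ℝ := fun n => (∫ s, ‖x n s‖ ^ p ∂μ) ^ p⁻¹ with ha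
  set b : ℝ := (∫ s, ‖xlim s‖ ^ p ∂μ) ^ p⁻¹ with hb
  set c : ℕ → ℝ := fun n => (∫ s, ‖x n s - xlim s‖ ^ p ∂μ) ^ p⁻¹ with hc
  have hsn : ∀ n, eLpNorm (x n) P μ = ENNReal.ofReal (a n) := by
    intro n
    rw [(memn n).eLpNorm_eq_integral_rpow_norm hP0 hPtop, hPt]
  have hsl : eLpNorm xlim P μ = ENNReal.ofReal b := by
    rw [meml.eLpNorm_eq_integral_rpow_norm hP0 hPtop, hPt]
  have hsd : ∀ n, eLpNorm (fun s => x n s - xlim s) P μ = ENNReal.ofReal (c n) := by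
    intro n
    rw [(memd n).eLpNorm_eq_integral_rpow_norm hP0 hPtop, hPt]
  have ha0 : ∀ n, 0 ≤ a n := fun n =>
    Real.rpow_nonneg (integral_nonneg fun s => Real.rpow_nonneg (norm_nonneg _) _) _
  have hb0 : 0 ≤ b :=
    Real.rpow_nonneg (integral_nonneg fun s => Real.rpow_nonneg (norm_nonneg _) _) _
  have hc0 : ∀ n, 0 ≤ c n := fun n =>
    Real.rpow_nonneg (integral_nonneg fun s => Real.rpow_nonneg (norm_nonneg _) _) _
  -- triangle inequalities
  have tri1 : ∀ n, a n ≤ c n + b := by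
    intro n
    have h := eLpNorm_add_le (μ := μ) (p := P)
      ((hxm n).aestronglyMeasurable.sub hxlimm.aestronglyMeasurable)
      hxlimm.aestronglyMeasurable hP1
    have hfun : ((fun i => x n i - xlim i) + xlim) = x n := by ext s i; simp
    simp only [Pi.sub_def] at h
    rw [hfun] at h
    rw [hsn n, hsd n, hsl, ← ENNReal.ofReal_add (hc0 n) hb0] at h
    exact (ENNReal.ofReal_le_ofReal_iff (by linarith [hc0 n, hb0])).1 h
  have tri2 : ∀ n, b ≤ c n + a n := by
    intro n
    have h := eLpNorm_add_le (μ := μ) (p := P)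
      (hxlimm.aestronglyMeasurable.sub (hxm n).aestronglyMeasurable)
      ((hxm n).aestronglyMeasurable) hP1
    have hfun : ((fun i => xlim i - x n i) + x n) = xlim := by ext s i; simp
    simp only [Pi.sub_def] at h
    rw [hfun] at h
    have heq : eLpNorm (fun s => xlim s - x n s) P μ = eLpNorm (fun s => x n s - xlim s) P μ := by
      rw [← eLpNorm_neg]; congr 1; ext s; simp
    rw [hsl, heq, hsd n, hsn n, ← ENNReal.ofReal_add (hc0 n) (ha0 n)] at h
    exact (ENNReal.ofReal_le_ofReal_iff (by linarith [hc0 n, ha0 n])).1 h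
  -- c → 0
  have hint_eq : ∀ n, (∫ s, ‖x n s - xlim s‖ ^ p ∂μ) = ∫ s in (0:ℝ)..t, ‖x n s - xlim s‖ ^ p := by
    intro n; rw [intervalIntegral.integral_of_le ht.le]
  have hcconv : Tendsto c atTop (nhds 0) := by
    have : Tendsto (fun n => (∫ s, ‖x n s - xlim s‖ ^ p ∂μ)) atTop (nhds 0) := by
      simp only [hint_eq]; exact hconv
    have hcont : Tendsto (fun y : ℝ => y ^ p⁻¹) (nhds 0) (nhds 0) := by
      have := (Real.continuousAt_rpow_const 0 p⁻¹ (Or.inr (by positivity))).tendsto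
      simpa [Real.zero_rpow (by positivity : p⁻¹ ≠ 0)] using this
    exact hcont.comp this
  -- a → b by squeeze
  have haconv : Tendsto a atTop (nhds b) := by
    rw [tendsto_iff_dist_tendsto_zero]
    apply squeeze_zero (fun n => dist_nonneg) (fun n => ?_) hcconv
    rw [Real.dist_eq, abs_le]
    constructor <;> linarith [tri1 n, tri2 n]
  -- conclude
  have hfinal : ∀ n, (∫ s in (0:ℝ)..t, ‖x n s‖ ^ p) = (a n) ^ p := by
    intro n
    rw [ha]
    rw [Real.rpow_inv_rpow (integral_nonneg fun s => Real.rpow_nonneg (norm_nonneg _) _) hp0.ne',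
      intervalIntegral.integral_of_le ht.le]
  have hfinalb : (∫ s in (0:ℝ)..t, ‖xlim s‖ ^ p) = b ^ p := by
    rw [hb, Real.rpow_inv_rpow (integral_nonneg fun s => Real.rpow_nonneg (norm_nonneg _) _) hp0.ne',
      intervalIntegral.integral_of_le ht.le]
  simp only [hfinal, hfinalb]
  exact ((Real.continuousAt_rpow_const b p (Or.inr hp0.le)).tendsto).comp haconv

end aux

section aux2

variable {d : ℕ}

lemma intInt (p u : ℝ) (x : ℝ → EuclideanSpace ℝ (Fin d))
    (hxloc : ∀ T : ℝ, IntervalIntegrable (fun s => ‖x s‖ ^ p) volume 0 T) (c e : ℝ) :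
    IntervalIntegrable (fun s => 1 + u + ‖x s‖ ^ p) volume c e :=
  intervalIntegrable_const.add ((hxloc c).symm.trans (hxloc e))

lemma mySlope (p u : ℝ) (hu : 0 ≤ u) (x : ℝ → EuclideanSpace ℝ (Fin d))
    (hxloc : ∀ T : ℝ, IntervalIntegrable (fun s => ‖x s‖ ^ p) volume 0 T)
    {a b : ℝ} (hab : a ≤ b) :
    (∫ s in (0:ℝ)..a, (1 + u + ‖x s‖ ^ p)) + (b - a) ≤ ∫ s in (0:ℝ)..b, (1 + u + ‖x s‖ ^ p) := by
  rw [← intervalIntegral.integral_add_adjacent_intervals (intInt p u x hxloc 0 a)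
    (intInt p u x hxloc a b)]
  have h2 : (∫ s in a..b, (1:ℝ)) ≤ ∫ s in a..b, (1 + u + ‖x s‖ ^ p) :=
    intervalIntegral.integral_mono_on hab intervalIntegrable_const (intInt p u x hxloc a b)
      (fun s _ => by nlinarith [Real.rpow_nonneg (norm_nonneg (x s)) p])
  simp only [intervalIntegral.integral_const, smul_eq_mul, mul_one] at h2
  linarith

/-- `T` is at most any `t ≥ 0` with integral `≥ m` ; at least any `t ≥ 0` with integral `< m`. -/
lemma hit_mem {p m u : ℝ} (hu : 0 ≤ u) {x : ℝ → EuclideanSpace ℝ (Fin d)}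
    (hxloc : ∀ T : ℝ, IntervalIntegrable (fun s => ‖x s‖ ^ p) volume 0 T)
    (hm : 0 < m) :
    m ∈ {t : ℝ | 0 ≤ t ∧ m ≤ ∫ s in (0:ℝ)..t, (1 + u + ‖x s‖ ^ p)} := by
  refine ⟨hm.le, ?_⟩
  have := mySlope p u hu x hxloc (a := 0) (b := m) hm.le
  simpa using this

lemma hit_le {p m u : ℝ} (hu : 0 ≤ u) {x : ℝ → EuclideanSpace ℝ (Fin d)}
    (hxloc : ∀ T : ℝ, IntervalIntegrable (fun s => ‖x s‖ ^ p) volume 0 T)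
    (hm : 0 < m) {t : ℝ} (ht : 0 ≤ t) (hmt : m ≤ ∫ s in (0:ℝ)..t, (1 + u + ‖x s‖ ^ p)) :
    hittingTimeLp p m u x ≤ t :=
  csInf_le ⟨0, fun s hs => hs.1⟩ ⟨ht, hmt⟩

lemma le_hit {p m u : ℝ} (hu : 0 ≤ u) {x : ℝ → EuclideanSpace ℝ (Fin d)}
    (hxloc : ∀ T : ℝ, IntervalIntegrable (fun s => ‖x s‖ ^ p) volume 0 T)
    (hm : 0 < m) {t : ℝ} (ht : 0 ≤ t) (hmt : (∫ s in (0:ℝ)..t, (1 + u + ‖x s‖ ^ p)) < m) :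
    t ≤ hittingTimeLp p m u x := by
  apply le_csInf ⟨m, hit_mem hu hxloc hm⟩
  intro s hs
  by_contra hlt
  push_neg at hlt
  have := mySlope p u hu x hxloc (a := s) (b := t) hlt.le
  linarith [hs.2]

lemma hit_nonneg {p m u : ℝ} (hu : 0 ≤ u) {x : ℝ → EuclideanSpace ℝ (Fin d)}
    (hxloc : ∀ T : ℝ, IntervalIntegrable (fun s => ‖x s‖ ^ p) volume 0 T)
    (hm : 0 < m) : 0 ≤ hittingTimeLp p m u x :=
  le_csInf ⟨m, hit_mem hu hxloc hm⟩ fun s hs => hs.1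

/-- Claim A: `F (T + ε) ≥ m + ε/2`. -/
lemma hit_gain {p m u : ℝ} (hu : 0 ≤ u) {x : ℝ → EuclideanSpace ℝ (Fin d)}
    (hxloc : ∀ T : ℝ, IntervalIntegrable (fun s => ‖x s‖ ^ p) volume 0 T)
    (hm : 0 < m) {ε : ℝ} (hε : 0 < ε) :
    m + ε / 2 ≤ ∫ s in (0:ℝ)..(hittingTimeLp p m u x + ε), (1 + u + ‖x s‖ ^ p) := by
  obtain ⟨s, hs, hslt⟩ := exists_lt_of_csInf_lt ⟨m, hit_mem hu hxloc hm⟩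
    (show sInf _ < hittingTimeLp p m u x + ε / 2 by unfold hittingTimeLp; linarith)
  have := mySlope p u hu x hxloc (a := s) (b := hittingTimeLp p m u x + ε) (by linarith)
  linarith [hs.2]

end aux2

/-- `T_m` is (sequentially) continuous on `[0,1] × L^p_loc([0,∞), ℝ^d)` for the
product of the usual topology on `[0,1]` and the local `L^p` topology. -/
theorem stmt10 {d : ℕ} (p : ℝ) (hp : 1 ≤ p) (m : ℝ) (hm : 0 < m)
    (u : ℕ → ℝ) (ulim : ℝ) (hu : ∀ n, u n ∈ Icc (0 : ℝ) 1) (hulim : ulim ∈ Icc (0 : ℝ) 1)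
    (x : ℕ → ℝ → EuclideanSpace ℝ (Fin d)) (xlim : ℝ → EuclideanSpace ℝ (Fin d))
    (hxm : ∀ n, Measurable (x n)) (hxlimm : Measurable xlim)
    (hxloc : ∀ n, ∀ T : ℝ, IntervalIntegrable (fun s => ‖x n s‖ ^ p) volume 0 T)
    (hxlimloc : ∀ T : ℝ, IntervalIntegrable (fun s => ‖xlim s‖ ^ p) volume 0 T)
    (huconv : Tendsto u atTop (nhds ulim))
    (hxconv : ∀ T > (0 : ℝ),
      Tendsto (fun n => ∫ s in (0 : ℝ)..T, ‖x n s - xlim s‖ ^ p) atTop (nhds 0)) :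
    Tendsto (fun n => hittingTimeLp p m (u n) (x n)) atTop
      (nhds (hittingTimeLp p m ulim xlim)) := by
  set T := hittingTimeLp p m ulim xlim with hT
  have hul0 : 0 ≤ ulim := hulim.1
  have hT0 : 0 ≤ T := hit_nonneg hul0 hxlimloc hm
  -- pointwise convergence of the primitives
  have hFconv : ∀ t > (0:ℝ), Tendsto (fun n => ∫ s in (0:ℝ)..t, (1 + u n + ‖x n s‖ ^ p)) atTop
      (nhds (∫ s in (0:ℝ)..t, (1 + ulim + ‖xlim s‖ ^ p))) := by
    intro t ht
    have h1 : ∀ n, (∫ s in (0:ℝ)..t, (1 + u n + ‖x n s‖ ^ p))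
        = (1 + u n) * t + ∫ s in (0:ℝ)..t, ‖x n s‖ ^ p := by
      intro n
      rw [intervalIntegral.integral_add intervalIntegrable_const (hxloc n t)]
      simp [mul_comm, mul_add]
    have h2 : (∫ s in (0:ℝ)..t, (1 + ulim + ‖xlim s‖ ^ p))
        = (1 + ulim) * t + ∫ s in (0:ℝ)..t, ‖xlim s‖ ^ p := by
      rw [intervalIntegral.integral_add intervalIntegrable_const (hxlimloc t)]
      simp [mul_comm, mul_add]
    rw [h2]
    simp only [h1]
    exact ((tendsto_const_nhds.add huconv).mul_const t).add
      (key_conv p hp ht x xlim hxm hxlimm (fun n => hxloc n t) (hxlimloc t) (hxconv t ht))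
  have upper : ∀ ε > (0:ℝ), ∀ᶠ n in atTop, hittingTimeLp p m (u n) (x n) ≤ T + ε := by
    intro ε hε
    have hF := hit_gain hul0 hxlimloc hm hε
    have hev := (hFconv (T + ε) (by linarith)).eventually
      (eventually_gt_nhds (show m < ∫ s in (0:ℝ)..(T + ε), (1 + ulim + ‖xlim s‖ ^ p) by
        linarith))
    filter_upwards [hev] with n hn
    exact hit_le (hu n).1 (hxloc n) hm (by linarith) hn.le
  have lower : ∀ ε > (0:ℝ), ∀ᶠ n in atTop, T - ε ≤ hittingTimeLp p m (u n) (x n) := by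
    intro ε hε
    rcases le_or_gt T ε with h | h
    · filter_upwards with n
      have := hit_nonneg (hu n).1 (hxloc n) hm
      linarith
    · have hFlt : (∫ s in (0:ℝ)..(T - ε), (1 + ulim + ‖xlim s‖ ^ p)) < m := by
        by_contra hge
        push_neg at hge
        have := hit_le hul0 hxlimloc hm (by linarith) hge
        linarith
      have hev := (hFconv (T - ε) (by linarith)).eventually (eventually_lt_nhds hFlt)
      filter_upwards [hev] with n hn
      exact le_hit (hu n).1 (hxloc n) hm (by linarith) hn
  rw [tendsto_order]
  constructor
  · intro a ha
    have hε : (0:ℝ) < (T - a) / 2 := by linarith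
    filter_upwards [lower _ hε] with n hn
    have : T - (T - a) / 2 ≤ hittingTimeLp p m (u n) (x n) := hn
    linarith
  · intro a ha
    have hε : (0:ℝ) < (a - T) / 2 := by linarith
    filter_upwards [upper _ hε] with n hn
    linarith
end

section
/- For ω ∈ D(ℝ^d) (càdlàg paths) and u > 0, define recursively t⁰(ω,u) = 0 and t^{p+1}(ω,u) = inf{ t > t^p(ω,u) : ‖Δω(t)‖ > u }. If ωₙ → ω locally uniformly and u > 0 is such that no jump of ω has norm exactly u (i.e. u ∉ { ‖Δω(t)‖ : t > 0 }), then for every t > 0 with ‖Δω(t)‖ ≠ u and every p with t^p(ω,u) ≤ t < t^{p+1}(ω,u), eventually the jumps of ωₙ of size exceeding u in (0,t] occur exactly at the times t¹(ω,u), …, t^p(ω,u). -/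
open Filter Set
open scoped NNReal ENNReal

/-- The jump `Δω(t) = ω(t) - ω(t-)`. -/
noncomputable def pathJump {d : ℕ} (ω : ℝ≥0 → EuclideanSpace ℝ (Fin d))
    (t : ℝ≥0) : EuclideanSpace ℝ (Fin d) :=
  ω t - Function.leftLim ω t

/-- The successive times of jumps of norm exceeding `u`:
`t⁰ = 0`, `t^{p+1} = inf { t > t^p : ‖Δω(t)‖ > u }` (with `inf ∅ = ∞`). -/
noncomputable def jumpTimes {d : ℕ} (ω : ℝ≥0 → EuclideanSpace ℝ (Fin d))
    (u : ℝ) : ℕ → ℝ≥0∞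
  | 0 => 0
  | p + 1 =>
      ⨅ (s : ℝ≥0) (_ : jumpTimes ω u p < (s : ℝ≥0∞)) (_ : u < ‖pathJump ω s‖),
        (s : ℝ≥0∞)

open scoped Topology

section Aux

variable {d : ℕ}

/-- For a càdlàg path, the function tends to its left limit from the left. -/
lemma Cadlag.leftLim_tendsto {ω : ℝ≥0 → EuclideanSpace ℝ (Fin d)} (hω : Cadlag ω) {s : ℝ≥0}
    (hs : 0 < s) : Tendsto ω (𝓝[<] s) (𝓝 (Function.leftLim ω s)) := by
  obtain ⟨l, hl⟩ := hω.2 s hs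
  have heq : Function.leftLim ω s = l :=
    leftLim_eq_of_tendsto (α := ℝ≥0) (h := nhdsWithin_Iio_self_neBot' (α := ℝ≥0) ⟨0, hs⟩) hl
  rw [heq]; exact hl

/-- A càdlàg path has finitely many jumps of norm `> δ` in `(0, T]`. -/
lemma Cadlag.bigJumps_finite {ω : ℝ≥0 → EuclideanSpace ℝ (Fin d)} (hω : Cadlag ω) {δ : ℝ}
    (hδ : 0 < δ) (T : ℝ≥0) :
    {s : ℝ≥0 | 0 < s ∧ s ≤ T ∧ δ < ‖pathJump ω s‖}.Finite := by
  set S := {s : ℝ≥0 | 0 < s ∧ s ≤ T ∧ δ < ‖pathJump ω s‖} with hS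
  have key : ∀ x : ℝ≥0, ∃ U : Set ℝ≥0, IsOpen U ∧ x ∈ U ∧ ∀ y ∈ U, y ∈ S → y = x := by
    intro x
    have h4 : 0 < δ / 4 := by linarith
    have hr : Tendsto ω (𝓝[≥] x) (𝓝 (ω x)) := hω.1 x
    have hr' : {z : ℝ≥0 | ‖ω z - ω x‖ < δ / 4} ∈ 𝓝[≥] x := by
      have := hr (Metric.ball_mem_nhds (ω x) h4)
      exact Filter.mem_of_superset this (fun z hz => by simpa [dist_eq_norm] using hz)
    obtain ⟨b, hxb, hIb⟩ := (mem_nhdsGE_iff_exists_Ico_subset).1 hr'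
    have claimR : ∀ y : ℝ≥0, x < y → y < b → ‖pathJump ω y‖ ≤ δ / 2 := by
      intro y hxy hyb
      have hy0 : 0 < y := lt_of_le_of_lt ((zero_le : 0 ≤ x)) hxy
      haveI : (𝓝[<] y).NeBot := nhdsWithin_Iio_self_neBot' (α := ℝ≥0) ⟨0, hy0⟩
      have hev : ∀ᶠ z in 𝓝[<] y, ‖ω z - ω x‖ < δ / 4 := by
        filter_upwards [Ioo_mem_nhdsLT_of_mem (⟨hxy, le_refl y⟩ : y ∈ Ioc x y)] with z hz
        exact hIb ⟨le_of_lt hz.1, lt_trans hz.2 hyb⟩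
      have hlim : Tendsto (fun z => ‖ω z - ω x‖) (𝓝[<] y)
          (𝓝 ‖Function.leftLim ω y - ω x‖) :=
        ((hω.leftLim_tendsto hy0).sub tendsto_const_nhds).norm
      have h1 : ‖Function.leftLim ω y - ω x‖ ≤ δ / 4 :=
        le_of_tendsto hlim (hev.mono fun z hz => le_of_lt hz)
      have h2 : ‖ω y - ω x‖ < δ / 4 := hIb ⟨le_of_lt hxy, hyb⟩
      have heq : pathJump ω y = (ω y - ω x) - (Function.leftLim ω y - ω x) := by
        simp only [pathJump]; abel
      rw [heq]
      calc ‖(ω y - ω x) - (Function.leftLim ω y - ω x)‖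
          ≤ ‖ω y - ω x‖ + ‖Function.leftLim ω y - ω x‖ := norm_sub_le _ _
        _ ≤ δ / 4 + δ / 4 := by linarith
        _ = δ / 2 := by ring
    rcases eq_or_lt_of_le ((zero_le : 0 ≤ x)) with hx0 | hx0
    · refine ⟨Iio b, isOpen_Iio, hxb, ?_⟩
      intro y hy hyS
      exfalso
      have := claimR y (hx0 ▸ hyS.1) hy
      linarith [hyS.2.2]
    · have hl : Tendsto ω (𝓝[<] x) (𝓝 (Function.leftLim ω x)) := hω.leftLim_tendsto hx0
      have hl' : {z : ℝ≥0 | ‖ω z - Function.leftLim ω x‖ < δ / 4} ∈ 𝓝[<] x := by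
        have := hl (Metric.ball_mem_nhds _ h4)
        exact Filter.mem_of_superset this (fun z hz => by simpa [dist_eq_norm] using hz)
      obtain ⟨a, ha, hIa⟩ := (mem_nhdsLT_iff_exists_Ioo_subset' hx0).1 hl'
      have claimL : ∀ y : ℝ≥0, a < y → y < x → 0 < y → ‖pathJump ω y‖ ≤ δ / 2 := by
        intro y hay hyx hy0
        haveI : (𝓝[<] y).NeBot := nhdsWithin_Iio_self_neBot' (α := ℝ≥0) ⟨0, hy0⟩
        have hev : ∀ᶠ z in 𝓝[<] y, ‖ω z - Function.leftLim ω x‖ < δ / 4 := by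
          filter_upwards [Ioo_mem_nhdsLT_of_mem (⟨hay, le_refl y⟩ : y ∈ Ioc a y)] with z hz
          exact hIa ⟨hz.1, lt_trans hz.2 hyx⟩
        have hlim : Tendsto (fun z => ‖ω z - Function.leftLim ω x‖) (𝓝[<] y)
            (𝓝 ‖Function.leftLim ω y - Function.leftLim ω x‖) :=
          ((hω.leftLim_tendsto hy0).sub tendsto_const_nhds).norm
        have h1 : ‖Function.leftLim ω y - Function.leftLim ω x‖ ≤ δ / 4 :=
          le_of_tendsto hlim (hev.mono fun z hz => le_of_lt hz)
        have h2 : ‖ω y - Function.leftLim ω x‖ < δ / 4 := hIa ⟨hay, hyx⟩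
        have heq : pathJump ω y = (ω y - Function.leftLim ω x)
            - (Function.leftLim ω y - Function.leftLim ω x) := by
          simp only [pathJump]; abel
        rw [heq]
        calc ‖_ - _‖ ≤ ‖ω y - Function.leftLim ω x‖
              + ‖Function.leftLim ω y - Function.leftLim ω x‖ := norm_sub_le _ _
          _ ≤ δ / 4 + δ / 4 := by linarith
          _ = δ / 2 := by ring
      refine ⟨Ioo a b, isOpen_Ioo, ⟨ha, hxb⟩, ?_⟩
      intro y hy hyS
      by_contra hne
      rcases lt_or_gt_of_ne hne with h | h
      · have := claimL y hy.1 h hyS.1; linarith [hyS.2.2]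
      · have := claimR y h hy.2; linarith [hyS.2.2]
  choose U hUo hUx hUs using key
  obtain ⟨F, hF⟩ := (isCompact_Icc : IsCompact (Icc (0:ℝ≥0) T)).elim_finite_subcover U hUo
    (fun y _ => mem_iUnion.2 ⟨y, hUx y⟩)
  refine Set.Finite.subset F.finite_toSet ?_
  intro s hs
  have hsI : s ∈ Icc (0:ℝ≥0) T := ⟨(zero_le : 0 ≤ s), hs.2.1⟩
  obtain ⟨x, hxF, hsx⟩ := mem_iUnion₂.1 (hF hsI)
  have := hUs x s hsx hs
  simpa [this] using hxF

variable {ω : ℝ≥0 → EuclideanSpace ℝ (Fin d)} {u : ℝ}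

lemma jumpTimes_succ_eq (p : ℕ) : jumpTimes ω u (p + 1) =
    ⨅ (s : ℝ≥0) (_ : jumpTimes ω u p < (s : ℝ≥0∞)) (_ : u < ‖pathJump ω s‖),
      (s : ℝ≥0∞) := by
  rw [jumpTimes]

lemma jumpTimes_mono : Monotone (jumpTimes ω u) :=
  monotone_nat_of_le_succ fun p => by
    rw [jumpTimes_succ_eq]
    exact le_iInf fun s => le_iInf fun h => le_iInf fun _ => h.le

lemma jumpTimes_succ_le {p : ℕ} {s : ℝ≥0} (h1 : jumpTimes ω u p < (s : ℝ≥0∞))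
    (h2 : u < ‖pathJump ω s‖) : jumpTimes ω u (p + 1) ≤ (s : ℝ≥0∞) := by
  rw [jumpTimes_succ_eq]
  exact iInf_le_of_le s (iInf_le_of_le h1 (iInf_le _ h2))

/-- The infimum defining `jumpTimes` is attained when finite. -/
lemma jumpTimes_succ_attained (hω : Cadlag ω) (hu : 0 < u) {p : ℕ}
    (h : jumpTimes ω u (p + 1) ≠ ⊤) :
    ∃ s : ℝ≥0, jumpTimes ω u (p + 1) = (s : ℝ≥0∞) ∧ jumpTimes ω u p < (s : ℝ≥0∞) ∧
      u < ‖pathJump ω s‖ := by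
  have hA : ∃ s₀ : ℝ≥0, jumpTimes ω u p < (s₀ : ℝ≥0∞) ∧ u < ‖pathJump ω s₀‖ := by
    by_contra hA
    push_neg at hA
    apply h
    rw [jumpTimes_succ_eq]
    refine top_unique (le_iInf fun s => le_iInf fun h1 => le_iInf fun h2 => ?_)
    exact absurd (hA s h1) (not_le.2 h2)
  obtain ⟨s₀, hs₀1, hs₀2⟩ := hA
  have hs₀pos : 0 < s₀ := by
    have := lt_of_le_of_lt ((zero_le : 0 ≤ (jumpTimes ω u p))) hs₀1
    exact_mod_cast this
  set B := {s : ℝ≥0 | (0 < s ∧ s ≤ s₀ ∧ u < ‖pathJump ω s‖) ∧ jumpTimes ω u p < (s : ℝ≥0∞)}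
    with hBdef
  have hBfin : B.Finite := ((hω.bigJumps_finite hu s₀).subset (fun s hs => hs.1) : _)
  have hBne : B.Nonempty := ⟨s₀, ⟨hs₀pos, le_refl _, hs₀2⟩, hs₀1⟩
  obtain ⟨m, hmB, hmin⟩ := Set.exists_min_image B id hBfin hBne
  refine ⟨m, le_antisymm ?_ ?_, hmB.2, hmB.1.2.2⟩
  · exact jumpTimes_succ_le hmB.2 hmB.1.2.2
  · rw [jumpTimes_succ_eq]
    refine le_iInf fun s => le_iInf fun h1 => le_iInf fun h2 => ?_
    rcases le_or_gt s s₀ with hss | hss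
    · have hs0 : 0 < s := by exact_mod_cast lt_of_le_of_lt ((zero_le : 0 ≤ (jumpTimes ω u p))) h1
      exact_mod_cast ENNReal.coe_le_coe.2 (hmin s ⟨⟨hs0, hss, h2⟩, h1⟩)
    · exact ENNReal.coe_le_coe.2 (le_trans (hmin s₀ ⟨⟨hs₀pos, le_refl _, hs₀2⟩, hs₀1⟩) hss.le)

/-- If `t^p(ω, u) ≤ t < t^{p+1}(ω, u)`, the jumps of `ω` of norm `> u` in `(0, t]` are
exactly the times `t¹(ω, u), …, t^p(ω, u)`. -/
lemma jumpSet_eq (hω : Cadlag ω) (hu : 0 < u) {t : ℝ≥0} {p : ℕ}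
    (hp₁ : jumpTimes ω u p ≤ (t : ℝ≥0∞)) (hp₂ : (t : ℝ≥0∞) < jumpTimes ω u (p + 1)) :
    {s : ℝ≥0 | 0 < s ∧ s ≤ t ∧ u < ‖pathJump ω s‖} =
    {s : ℝ≥0 | ∃ i, 1 ≤ i ∧ i ≤ p ∧ jumpTimes ω u i = (s : ℝ≥0∞)} := by
  ext s
  simp only [mem_setOf_eq]
  constructor
  · rintro ⟨hs0, hst, hsj⟩
    classical
    set P : ℕ → Prop := fun i => jumpTimes ω u i < (s : ℝ≥0∞) with hPdef
    have hP0 : P 0 := by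
      show jumpTimes ω u 0 < (s : ℝ≥0∞)
      rw [jumpTimes]
      exact_mod_cast hs0
    set i := Nat.findGreatest P p with hidef
    have hip : i ≤ p := Nat.findGreatest_le p
    have hPi : P i := Nat.findGreatest_spec (Nat.zero_le p) hP0
    have hle : jumpTimes ω u (i + 1) ≤ (s : ℝ≥0∞) := jumpTimes_succ_le hPi hsj
    rcases eq_or_lt_of_le hip with hip' | hip'
    · exfalso
      rw [hip'] at hle
      exact absurd (lt_of_le_of_lt (le_trans hle (ENNReal.coe_le_coe.2 hst)) hp₂)
        (lt_irrefl _)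
    · have hnP : ¬ P (i + 1) := Nat.findGreatest_is_greatest (Nat.lt_succ_self i) hip'
      have hge : (s : ℝ≥0∞) ≤ jumpTimes ω u (i + 1) := not_lt.1 hnP
      exact ⟨i + 1, Nat.succ_le_succ (Nat.zero_le i), hip', le_antisymm hle hge⟩
  · rintro ⟨i, hi1, hip, hie⟩
    obtain ⟨j, rfl⟩ : ∃ j, i = j + 1 := ⟨i - 1, by omega⟩
    have hne : jumpTimes ω u (j + 1) ≠ ⊤ := by rw [hie]; exact ENNReal.coe_ne_top
    obtain ⟨s', hs'eq, hs'gt, hs'jump⟩ := jumpTimes_succ_attained hω hu hne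
    have hss : s' = s := by
      rw [hie] at hs'eq
      exact_mod_cast hs'eq.symm
    subst hss
    refine ⟨?_, ?_, hs'jump⟩
    · exact_mod_cast lt_of_le_of_lt ((zero_le : 0 ≤ (jumpTimes ω u j))) hs'gt
    · have : (s' : ℝ≥0∞) ≤ (t : ℝ≥0∞) := hie ▸ le_trans (jumpTimes_mono hip) hp₁
      exact_mod_cast this

/-- If two càdlàg paths are uniformly `ε`-close on `[0, T]`, their jumps are `2ε`-close. -/
lemma jump_close_s12 {ωn ω : ℝ≥0 → EuclideanSpace ℝ (Fin d)} (hωn : Cadlag ωn) (hω : Cadlag ω)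
    {T : ℝ≥0} {ε : ℝ} (h : ∀ y ∈ Icc (0:ℝ≥0) T, dist (ωn y) (ω y) < ε)
    {s : ℝ≥0} (hs : 0 < s) (hsT : s ≤ T) :
    ‖pathJump ωn s - pathJump ω s‖ ≤ 2 * ε := by
  haveI : (𝓝[<] s).NeBot := nhdsWithin_Iio_self_neBot' (α := ℝ≥0) ⟨0, hs⟩
  have h1 : ‖ωn s - ω s‖ < ε := by
    have := h s ⟨(zero_le : 0 ≤ s), hsT⟩
    rwa [dist_eq_norm] at this
  have hlim : Tendsto (fun z => ‖ωn z - ω z‖) (𝓝[<] s)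
      (𝓝 ‖Function.leftLim ωn s - Function.leftLim ω s‖) :=
    ((hωn.leftLim_tendsto hs).sub (hω.leftLim_tendsto hs)).norm
  have h2 : ‖Function.leftLim ωn s - Function.leftLim ω s‖ ≤ ε := by
    refine le_of_tendsto hlim ?_
    filter_upwards [self_mem_nhdsWithin] with z (hz : z < s)
    have := h z ⟨(zero_le : 0 ≤ z), le_trans hz.le hsT⟩
    rw [dist_eq_norm] at this
    exact this.le
  have heq : pathJump ωn s - pathJump ω s
      = (ωn s - ω s) - (Function.leftLim ωn s - Function.leftLim ω s) := by
    simp only [pathJump]; abel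
  rw [heq]
  calc ‖_ - _‖ ≤ ‖ωn s - ω s‖ + ‖Function.leftLim ωn s - Function.leftLim ω s‖ :=
        norm_sub_le _ _
    _ ≤ 2 * ε := by linarith

/-- Since `u` is not a jump size of `ω` and big jumps are finitely many, there is a gap
around `u` avoided by all jump sizes on `(0, t]`. -/
lemma exists_gap {ω : ℝ≥0 → EuclideanSpace ℝ (Fin d)} (hω : Cadlag ω) {u : ℝ} (hu : 0 < u)
    (hnotU : ∀ s : ℝ≥0, 0 < s → ‖pathJump ω s‖ ≠ u) (t : ℝ≥0) :
    ∃ ε : ℝ, 0 < ε ∧ ∀ s : ℝ≥0, 0 < s → s ≤ t →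
      (‖pathJump ω s‖ ≤ u - ε ∨ u + ε ≤ ‖pathJump ω s‖) := by
  classical
  have hfin := hω.bigJumps_finite (half_pos hu) t
  set F := hfin.toFinset with hF
  set G := insert (u / 4) (F.image fun s => |‖pathJump ω s‖ - u| / 2) with hG
  have hGne : G.Nonempty := Finset.insert_nonempty _ _
  set ε := G.min' hGne with hε
  have hε1 : ε ≤ u / 4 := Finset.min'_le _ _ (Finset.mem_insert_self _ _)
  have hεpos : 0 < ε := by
    have hmem := G.min'_mem hGne
    rcases Finset.mem_insert.1 hmem with h | h
    · rw [hε, h]; linarith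
    · obtain ⟨s, hsF, hseq⟩ := Finset.mem_image.1 h
      have hsS := hfin.mem_toFinset.1 hsF
      have hne := hnotU s hsS.1
      rw [hε, ← hseq]
      have : |‖pathJump ω s‖ - u| > 0 := abs_pos.2 (sub_ne_zero.2 hne)
      linarith
  refine ⟨ε, hεpos, ?_⟩
  intro s hs0 hst
  by_cases hbig : u / 2 < ‖pathJump ω s‖
  · have hsF : s ∈ F := hfin.mem_toFinset.2 ⟨hs0, hst, hbig⟩
    have hmem : |‖pathJump ω s‖ - u| / 2 ∈ G :=
      Finset.mem_insert_of_mem (Finset.mem_image_of_mem _ hsF)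
    have hε2 : ε ≤ |‖pathJump ω s‖ - u| / 2 := Finset.min'_le _ _ hmem
    rcases le_or_gt ‖pathJump ω s‖ u with hc | hc
    · left
      rw [abs_of_nonpos (by linarith)] at hε2
      linarith
    · right
      rw [abs_of_pos (by linarith)] at hε2
      linarith
  · left; push_neg at hbig; linarith

end Aux

theorem stmt12 {d : ℕ}
    (ωn : ℕ → ℝ≥0 → EuclideanSpace ℝ (Fin d)) (ω : ℝ≥0 → EuclideanSpace ℝ (Fin d))
    (hωn : ∀ n, Cadlag (ωn n)) (hω : Cadlag ω)
    (hconv : LocUnifTendsto ωn ω)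
    (u : ℝ) (hu : 0 < u)
    (hnotU : ∀ s : ℝ≥0, 0 < s → ‖pathJump ω s‖ ≠ u)
    (t : ℝ≥0) (ht : 0 < t)
    (p : ℕ) (hp₁ : jumpTimes ω u p ≤ (t : ℝ≥0∞))
    (hp₂ : (t : ℝ≥0∞) < jumpTimes ω u (p + 1)) :
    ∀ᶠ n in atTop,
      {s : ℝ≥0 | 0 < s ∧ s ≤ t ∧ u < ‖pathJump (ωn n) s‖} =
      {s : ℝ≥0 | ∃ i, 1 ≤ i ∧ i ≤ p ∧ jumpTimes ω u i = (s : ℝ≥0∞)} := by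
  obtain ⟨ε, hε, hgap⟩ := exists_gap hω hu hnotU t
  have hconv' := (Metric.tendstoUniformlyOn_iff.1 (hconv t)) (ε / 4) (by linarith)
  filter_upwards [hconv'] with n hn
  rw [← jumpSet_eq hω hu hp₁ hp₂]
  ext s
  simp only [mem_setOf_eq]
  have hd : ∀ y ∈ Icc (0:ℝ≥0) t, dist (ωn n y) (ω y) < ε / 4 := by
    intro y hy; rw [dist_comm]; exact hn y hy
  constructor
  · rintro ⟨hs0, hst, hsj⟩
    refine ⟨hs0, hst, ?_⟩
    have hclose : ‖pathJump (ωn n) s - pathJump ω s‖ ≤ 2 * (ε / 4) :=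
      jump_close_s12 (hωn n) hω hd hs0 hst
    have habs : |‖pathJump (ωn n) s‖ - ‖pathJump ω s‖| ≤ ε / 2 :=
      le_trans (abs_norm_sub_norm_le _ _) (by linarith)
    obtain ⟨ha1, ha2⟩ := abs_le.1 habs
    rcases hgap s hs0 hst with h | h
    · exfalso; linarith
    · linarith
  · rintro ⟨hs0, hst, hsj⟩
    refine ⟨hs0, hst, ?_⟩
    have hclose : ‖pathJump (ωn n) s - pathJump ω s‖ ≤ 2 * (ε / 4) :=
      jump_close_s12 (hωn n) hω hd hs0 hst
    have habs : |‖pathJump (ωn n) s‖ - ‖pathJump ω s‖| ≤ ε / 2 :=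
      le_trans (abs_norm_sub_norm_le _ _) (by linarith)
    obtain ⟨ha1, ha2⟩ := abs_le.1 habs
    rcases hgap s hs0 hst with h | h
    · exfalso; linarith
    · linarith
end
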